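/- Let ρ₀(x) = min(x,1-x) on I = (0,1). There is a constant C such that for every v ∈ C²([0,1]), ‖∂ₓv‖_{L^∞(I)} ≤ C (‖ρ₀ ∂ₓv‖_{L²(I)} + ‖ρ₀ ∂ₓ²v‖_{L²(I)} + ‖ρ₀² ∂ₓ²v‖_{L²(I)} + ‖ρ₀² ∂ₓ³v‖_{L²(I)} + ‖ρ₀² ∂ₓ⁴v‖_{L²(I)}) whenever v ∈ C⁴([0,1]). -/

import Mathlib

open Set MeasureTheory

set_option maxHeartbeats 1000000

open intervalIntegral

lemma ii_of_contOn {f : ℝ → ℝ} {c d a b : ℝ} (hf : ContinuousOn f (Icc c d))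
    (h1 : c ≤ a) (h2 : a ≤ b) (h3 : b ≤ d) : IntervalIntegrable f volume a b := by
  apply ContinuousOn.intervalIntegrable
  rw [uIcc_of_le h2]
  exact hf.mono (Icc_subset_Icc h1 h3)

lemma my_ftc {F F' : ℝ → ℝ} {a b : ℝ} (hab : a ≤ b)
    (hcont : ContinuousOn F (Icc a b))
    (hderiv : ∀ x ∈ Ioo a b, HasDerivAt F (F' x) x)
    (hint : IntervalIntegrable F' volume a b) :
    ∫ y in a..b, F' y = F b - F a :=
  integral_eq_sub_of_hasDeriv_right_of_le hab hcont
    (fun x hx => (hderiv x hx).hasDerivWithinAt) hint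

lemma amgm_pt (m : ℕ) {x : ℝ} (hx : 0 ≤ x) (a b : ℝ) :
    -(2 * (x^(2*m+1) * (a * b))) ≤ 1/2 * (x^(2*m) * a^2) + 2 * (x^(2*m+2) * b^2) := by
  have h1 : x^(2*m) = (x^m)^2 := by rw [pow_mul']
  have h2 : x^(2*m+1) = (x^m)^2 * x := by rw [pow_succ, pow_mul']
  have h3 : x^(2*m+2) = (x^m)^2 * x^2 := by rw [pow_add, pow_mul']
  rw [h1, h2, h3]
  nlinarith [sq_nonneg (x^m * a + 2*x*(x^m*b))]

lemma hardy_half (m : ℕ) (hm : m ≤ 1) (U U' : ℝ → ℝ)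
    (hU : ContinuousOn U (Icc 0 (1/2)))
    (hU' : ContinuousOn U' (Icc 0 (1/2)))
    (hd : ∀ x ∈ Ioo (0:ℝ) (1/2), HasDerivAt U (U' x) x) :
    ∫ x in (0:ℝ)..(1/2), x^(2*m) * (U x)^2 ≤
      2564 * ∫ x in (0:ℝ)..(1/2), x^(2*m+2) * ((U x)^2 + (U' x)^2) := by
  have hxp : ∀ n : ℕ, ContinuousOn (fun x : ℝ => x^n) (Icc 0 (1/2)) :=
    fun n => (continuous_pow n).continuousOn
  have cU2 : ContinuousOn (fun x => (U x)^2) (Icc 0 (1/2)) := hU.pow 2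
  have cU'2 : ContinuousOn (fun x => (U' x)^2) (Icc 0 (1/2)) := hU'.pow 2
  have cUU' : ContinuousOn (fun x => U x * U' x) (Icc 0 (1/2)) := hU.mul hU'
  -- integrands
  have c0 : ContinuousOn (fun x => x^(2*m) * (U x)^2) (Icc 0 (1/2)) := (hxp _).mul cU2
  have c1 : ContinuousOn (fun x => x^(2*m+1) * (U x * U' x)) (Icc 0 (1/2)) := (hxp _).mul cUU'
  have c2 : ContinuousOn (fun x => x^(2*m+2) * ((U x)^2 + (U' x)^2)) (Icc 0 (1/2)) :=
    (hxp _).mul (cU2.add cU'2)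
  have c2' : ContinuousOn (fun x => x^(2*m+2) * (U' x)^2) (Icc 0 (1/2)) := (hxp _).mul cU'2
  have cS : ContinuousOn (fun x => (U x)^2 + (U' x)^2) (Icc 0 (1/2)) := cU2.add cU'2
  have i0 : IntervalIntegrable (fun x => x^(2*m) * (U x)^2) volume 0 (1/2) :=
    ii_of_contOn c0 le_rfl (by norm_num) le_rfl
  have i1 : IntervalIntegrable (fun x => x^(2*m+1) * (U x * U' x)) volume 0 (1/2) :=
    ii_of_contOn c1 le_rfl (by norm_num) le_rfl
  have i2 : IntervalIntegrable (fun x => x^(2*m+2) * ((U x)^2 + (U' x)^2)) volume 0 (1/2) :=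
    ii_of_contOn c2 le_rfl (by norm_num) le_rfl
  have i2' : IntervalIntegrable (fun x => x^(2*m+2) * (U' x)^2) volume 0 (1/2) :=
    ii_of_contOn c2' le_rfl (by norm_num) le_rfl
  set I0 := ∫ x in (0:ℝ)..(1/2), x^(2*m) * (U x)^2 with hI0
  set J := ∫ x in (0:ℝ)..(1/2), x^(2*m+1) * (U x * U' x) with hJ
  set T := ∫ x in (0:ℝ)..(1/2), x^(2*m+2) * ((U x)^2 + (U' x)^2) with hT
  set I2 := ∫ x in (0:ℝ)..(1/2), x^(2*m+2) * (U' x)^2 with hI2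
  -- FTC for F x = x^(2m+1) * U x ^ 2
  have hftc : ((2*m+1 : ℝ)) * I0 + 2 * J = (1/2:ℝ)^(2*m+1) * (U (1/2))^2 := by
    have hF : ∀ x ∈ Ioo (0:ℝ) (1/2), HasDerivAt (fun x => x^(2*m+1) * (U x)^2)
        ((2*m+1 : ℝ) * (x^(2*m) * (U x)^2) + 2 * (x^(2*m+1) * (U x * U' x))) x := by
      intro x hx
      have h1 := (hasDerivAt_pow (2*m+1) x).mul ((hd x hx).pow 2)
      refine h1.congr_deriv ?_
      rw [Nat.add_sub_cancel]
      push_cast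
      simp only [Pi.pow_apply, Nat.cast_ofNat, Nat.reduceSub, pow_one]
      ring
    have hicomb : IntervalIntegrable (fun x => (2*m+1 : ℝ) * (x^(2*m) * (U x)^2)
        + 2 * (x^(2*m+1) * (U x * U' x))) volume 0 (1/2) :=
      (i0.const_mul _).add (i1.const_mul _)
    have := my_ftc (F := fun x => x^(2*m+1) * (U x)^2) (by norm_num)
      ((hxp _).mul cU2) hF hicomb
    rw [intervalIntegral.integral_add (i0.const_mul _) (i1.const_mul _),
      intervalIntegral.integral_const_mul, intervalIntegral.integral_const_mul] at this
    rw [this]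
    norm_num
  -- bound on -2J
  have hJbound : -(2*J) ≤ 1/2 * I0 + 2 * I2 := by
    have hneg : IntervalIntegrable (fun x => -(2*(x^(2*m+1)*(U x*U' x)))) volume 0 (1/2) := by
      exact (i1.const_mul 2).neg
    have h := intervalIntegral.integral_mono_on (by norm_num : (0:ℝ) ≤ 1/2)
      hneg
      ((i0.const_mul (1/2)).add (i2'.const_mul 2))
      (fun x hx => amgm_pt m hx.1 (U x) (U' x))
    rw [intervalIntegral.integral_neg, intervalIntegral.integral_const_mul,
      intervalIntegral.integral_add (i0.const_mul _) (i2'.const_mul _),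
      intervalIntegral.integral_const_mul, intervalIntegral.integral_const_mul] at h
    exact h
  -- boundary value bound
  set S := ∫ x in (1/4:ℝ)..(1/2), ((U x)^2 + (U' x)^2) with hS
  have iS : IntervalIntegrable (fun x => (U x)^2 + (U' x)^2) volume (1/4) (1/2) :=
    ii_of_contOn cS (by norm_num) (by norm_num) le_rfl
  have iU2q : IntervalIntegrable (fun x => (U x)^2) volume (1/4) (1/2) :=
    ii_of_contOn cU2 (by norm_num) (by norm_num) le_rfl
  have hbd : ∀ y ∈ Icc (1/4:ℝ) (1/2), (U (1/2))^2 ≤ (U y)^2 + S := by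
    intro y hy
    have hy0 : (0:ℝ) ≤ y := le_trans (by norm_num) hy.1
    have hG : ∀ x ∈ Ioo y (1/2:ℝ), HasDerivAt (fun x => (U x)^2) (2*(U x * U' x)) x := by
      intro x hx
      have h0x : x ∈ Ioo (0:ℝ) (1/2) := ⟨lt_of_le_of_lt hy0 hx.1, hx.2⟩
      have := (hd x h0x).pow 2
      refine this.congr_deriv ?_
      simp only [Nat.cast_ofNat, Nat.reduceSub, pow_one]
      ring
    have iG : IntervalIntegrable (fun x => 2*(U x*U' x)) volume y (1/2) :=
      (ii_of_contOn cUU' hy0 hy.2 le_rfl).const_mul 2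
    have hftc2 := my_ftc hy.2 ((hU.pow 2).mono (Icc_subset_Icc hy0 le_rfl)) hG iG
    have h1 : ∫ x in y..(1/2:ℝ), 2*(U x*U' x) ≤ ∫ x in y..(1/2:ℝ), ((U x)^2 + (U' x)^2) := by
      apply intervalIntegral.integral_mono_on hy.2 iG
        (ii_of_contOn cS hy0 hy.2 le_rfl)
      intro x _
      nlinarith [sq_nonneg (U x - U' x)]
    have h2 : ∫ x in y..(1/2:ℝ), ((U x)^2+(U' x)^2) ≤ S := by
      apply intervalIntegral.integral_mono_interval hy.1 hy.2 le_rfl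
        (Filter.Eventually.of_forall (fun x => by positivity)) iS
    simp only [Pi.pow_apply] at hftc2
    nlinarith [hftc2, h1, h2]
  have havg : (1/4:ℝ) * ((U (1/2))^2 - S) ≤ ∫ y in (1/4:ℝ)..(1/2), (U y)^2 := by
    have h := intervalIntegral.integral_mono_on (by norm_num : (1/4:ℝ) ≤ 1/2)
      (_root_.intervalIntegrable_const (c := (U (1/2))^2 - S)) iU2q
      (fun y hy => by have := hbd y hy; linarith)
    rw [intervalIntegral.integral_const, smul_eq_mul] at h
    nlinarith [h]
  have hU2S : ∫ y in (1/4:ℝ)..(1/2), (U y)^2 ≤ S := by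
    apply intervalIntegral.integral_mono_on (by norm_num) iU2q iS
    intro x _
    nlinarith [sq_nonneg (U' x)]
  have hbval : (U (1/2))^2 ≤ 5 * S := by linarith
  -- S ≤ 256 * T
  have hST : S ≤ 256 * T := by
    have h1 : S ≤ ∫ x in (1/4:ℝ)..(1/2), 256 * (x^(2*m+2) * ((U x)^2+(U' x)^2)) := by
      apply intervalIntegral.integral_mono_on (by norm_num) iS
        ((ii_of_contOn c2 (by norm_num) (by norm_num) le_rfl).const_mul 256)
      intro x hx
      have hx4 : ((1:ℝ)/4)^4 ≤ x^4 := pow_le_pow_left₀ (by norm_num) hx.1 4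
      have hx24 : x^4 ≤ x^(2*m+2) :=
        pow_le_pow_of_le_one (le_trans (by norm_num) hx.1) (le_trans hx.2 (by norm_num))
          (by omega)
      have h256 : (1:ℝ) ≤ 256 * x^(2*m+2) := by nlinarith
      nlinarith [sq_nonneg (U x), sq_nonneg (U' x)]
    have h2 : ∫ x in (1/4:ℝ)..(1/2), (x^(2*m+2) * ((U x)^2+(U' x)^2)) ≤ T := by
      apply intervalIntegral.integral_mono_interval (by norm_num) (by norm_num) le_rfl
        ((ae_restrict_iff' measurableSet_Ioc).mpr
          (Filter.Eventually.of_forall (fun x hx => by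
            have hx0 : (0:ℝ) ≤ x := le_of_lt hx.1
            positivity))) i2
    rw [intervalIntegral.integral_const_mul] at h1
    linarith
  have hI2T : I2 ≤ T := by
    apply intervalIntegral.integral_mono_on (by norm_num) i2' i2
    intro x hx
    have := pow_nonneg hx.1 (2*m+2)
    nlinarith [sq_nonneg (U x)]
  have hI0nn : (0:ℝ) ≤ I0 := by
    apply intervalIntegral.integral_nonneg (by norm_num)
    intro x hx
    have := pow_nonneg hx.1 (2*m)
    positivity
  have hbpow : ((1:ℝ)/2)^(2*m+1) * (U (1/2))^2 ≤ (U (1/2))^2 := by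
    have h1 : ((1:ℝ)/2)^(2*m+1) ≤ 1 :=
      pow_le_one₀ (by norm_num) (by norm_num)
    nlinarith [sq_nonneg (U (1/2))]
  have hm1 : (1:ℝ) ≤ 2*(m:ℝ)+1 := by
    have : (0:ℝ) ≤ (m:ℝ) := Nat.cast_nonneg m
    linarith
  nlinarith [hftc, hJbound, hbval, hST, hI2T, hI0nn, hbpow, hm1]

lemma hardy_full (m : ℕ) (hm : m ≤ 1) (U U' : ℝ → ℝ)
    (hU : ContinuousOn U (Icc 0 1)) (hU' : ContinuousOn U' (Icc 0 1))
    (hd : ∀ x ∈ Ioo (0:ℝ) 1, HasDerivAt U (U' x) x) :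
    ∫ x in (0:ℝ)..1, (min x (1-x))^(2*m) * (U x)^2 ≤
      2564 * ∫ x in (0:ℝ)..1, (min x (1-x))^(2*m+2) * ((U x)^2 + (U' x)^2) := by
  have cd : ContinuousOn (fun x : ℝ => min x (1-x)) (Icc 0 1) :=
    (continuous_id.min (continuous_const.sub continuous_id)).continuousOn
  have cL : ∀ n : ℕ, ContinuousOn (fun x => (min x (1-x))^n * (U x)^2) (Icc 0 1) :=
    fun n => (cd.pow n).mul (hU.pow 2)
  have cR : ∀ n : ℕ, ContinuousOn (fun x => (min x (1-x))^n * ((U x)^2 + (U' x)^2)) (Icc 0 1) :=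
    fun n => (cd.pow n).mul ((hU.pow 2).add (hU'.pow 2))
  -- splitting
  have splitL : (∫ x in (0:ℝ)..(1/2), (min x (1-x))^(2*m) * (U x)^2)
      + (∫ x in (1/2:ℝ)..1, (min x (1-x))^(2*m) * (U x)^2)
      = ∫ x in (0:ℝ)..1, (min x (1-x))^(2*m) * (U x)^2 :=
    intervalIntegral.integral_add_adjacent_intervals
      (ii_of_contOn (cL (2*m)) le_rfl (by norm_num) (by norm_num))
      (ii_of_contOn (cL (2*m)) (by norm_num) (by norm_num) le_rfl)
  have splitR : (∫ x in (0:ℝ)..(1/2), (min x (1-x))^(2*m+2) * ((U x)^2 + (U' x)^2))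
      + (∫ x in (1/2:ℝ)..1, (min x (1-x))^(2*m+2) * ((U x)^2 + (U' x)^2))
      = ∫ x in (0:ℝ)..1, (min x (1-x))^(2*m+2) * ((U x)^2 + (U' x)^2) :=
    intervalIntegral.integral_add_adjacent_intervals
      (ii_of_contOn (cR (2*m+2)) le_rfl (by norm_num) (by norm_num))
      (ii_of_contOn (cR (2*m+2)) (by norm_num) (by norm_num) le_rfl)
  -- on [0,1/2] : min x (1-x) = x
  have minL : ∀ n : ℕ, ∀ g : ℝ → ℝ, (∫ x in (0:ℝ)..(1/2), (min x (1-x))^n * g x)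
      = ∫ x in (0:ℝ)..(1/2), x^n * g x := by
    intro n g
    apply intervalIntegral.integral_congr
    intro x hx
    rw [uIcc_of_le (by norm_num : (0:ℝ) ≤ 1/2), mem_Icc] at hx
    have hmin : min x (1-x) = x := min_eq_left (by linarith [hx.1, hx.2])
    simp only [hmin]
  have minR : ∀ n : ℕ, ∀ g : ℝ → ℝ, (∫ x in (1/2:ℝ)..1, (min x (1-x))^n * g x)
      = ∫ x in (1/2:ℝ)..1, (1-x)^n * g x := by
    intro n g
    apply intervalIntegral.integral_congr
    intro x hx
    rw [uIcc_of_le (by norm_num : (1/2:ℝ) ≤ 1), mem_Icc] at hx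
    have hmin : min x (1-x) = 1-x := min_eq_right (by linarith [hx.1, hx.2])
    simp only [hmin]
  -- left half estimate
  have hleft : ∫ x in (0:ℝ)..(1/2), x^(2*m) * (U x)^2
      ≤ 2564 * ∫ x in (0:ℝ)..(1/2), x^(2*m+2) * ((U x)^2 + (U' x)^2) := by
    apply hardy_half m hm U U'
    · exact hU.mono (Icc_subset_Icc le_rfl (by norm_num))
    · exact hU'.mono (Icc_subset_Icc le_rfl (by norm_num))
    · intro x hx
      rw [mem_Ioo] at hx
      exact hd x ⟨hx.1, by linarith [hx.2]⟩
  -- right half estimate via reflection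
  have comp_sub : ∀ g : ℝ → ℝ, (∫ y in (0:ℝ)..(1/2), g (1 - y)) = ∫ x in (1/2:ℝ)..1, g x := by
    intro g
    have := intervalIntegral.integral_comp_sub_left (a := (0:ℝ)) (b := (1/2:ℝ)) g 1
    norm_num at this
    convert this using 2 <;> norm_num
  have hright : ∫ x in (1/2:ℝ)..1, (1-x)^(2*m) * (U x)^2
      ≤ 2564 * ∫ x in (1/2:ℝ)..1, (1-x)^(2*m+2) * ((U x)^2 + (U' x)^2) := by
    have hmaps : MapsTo (fun y : ℝ => 1 - y) (Icc 0 (1/2)) (Icc 0 1) := by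
      intro y hy
      rw [mem_Icc] at hy ⊢
      constructor <;> simp only <;> linarith [hy.1, hy.2]
    have hV : ContinuousOn (fun y => U (1 - y)) (Icc 0 (1/2)) :=
      hU.comp ((continuous_const.sub continuous_id).continuousOn) hmaps
    have hV' : ContinuousOn (fun y => -U' (1 - y)) (Icc 0 (1/2)) :=
      (hU'.comp ((continuous_const.sub continuous_id).continuousOn) hmaps).neg
    have hVd : ∀ y ∈ Ioo (0:ℝ) (1/2), HasDerivAt (fun y => U (1 - y)) (-U' (1 - y)) y := by
      intro y hy
      rw [mem_Ioo] at hy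
      have hinner : HasDerivAt (fun y : ℝ => 1 - y) (-1) y := by
        simpa using (hasDerivAt_id y).const_sub 1
      have houter : HasDerivAt U (U' (1 - y)) (1 - y) :=
        hd (1 - y) ⟨by linarith [hy.2], by linarith [hy.1]⟩
      have := houter.comp y hinner
      exact this.congr_deriv (by ring)
    have key := hardy_half m hm (fun y => U (1 - y)) (fun y => -U' (1 - y)) hV hV' hVd
    have eL : (∫ y in (0:ℝ)..(1/2), y^(2*m) * (U (1 - y))^2)
        = ∫ x in (1/2:ℝ)..1, (1-x)^(2*m) * (U x)^2 := by
      rw [← comp_sub (fun x => (1-x)^(2*m) * (U x)^2)]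
      apply intervalIntegral.integral_congr
      intro y _
      simp only [sub_sub_cancel]
    have eR : (∫ y in (0:ℝ)..(1/2), y^(2*m+2) * ((U (1 - y))^2 + (-U' (1 - y))^2))
        = ∫ x in (1/2:ℝ)..1, (1-x)^(2*m+2) * ((U x)^2 + (U' x)^2) := by
      rw [← comp_sub (fun x => (1-x)^(2*m+2) * ((U x)^2 + (U' x)^2))]
      apply intervalIntegral.integral_congr
      intro y _
      simp only [sub_sub_cancel, neg_sq]
    rw [eL, eR] at key
    exact key
  rw [← splitL, ← splitR]
  rw [minL (2*m) (fun x => (U x)^2), minR (2*m) (fun x => (U x)^2),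
    minL (2*m+2) (fun x => (U x)^2 + (U' x)^2), minR (2*m+2) (fun x => (U x)^2 + (U' x)^2)]
  linarith

lemma sobolev_pt (U U' : ℝ → ℝ)
    (hU : ContinuousOn U (Icc 0 1)) (hU' : ContinuousOn U' (Icc 0 1))
    (hd : ∀ x ∈ Ioo (0:ℝ) 1, HasDerivAt U (U' x) x)
    {x : ℝ} (hx : x ∈ Icc (0:ℝ) 1) :
    (U x)^2 ≤ 2 * (∫ y in (0:ℝ)..1, (U y)^2) + ∫ y in (0:ℝ)..1, (U' y)^2 := by
  rw [mem_Icc] at hx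
  have cS : ContinuousOn (fun t => (U t)^2 + (U' t)^2) (Icc 0 1) := (hU.pow 2).add (hU'.pow 2)
  have iS : IntervalIntegrable (fun t => (U t)^2 + (U' t)^2) volume 0 1 :=
    ii_of_contOn cS le_rfl (by norm_num) le_rfl
  have iU2 : IntervalIntegrable (fun t => (U t)^2) volume 0 1 :=
    ii_of_contOn (hU.pow 2) le_rfl (by norm_num) le_rfl
  have iU'2 : IntervalIntegrable (fun t => (U' t)^2) volume 0 1 :=
    ii_of_contOn (hU'.pow 2) le_rfl (by norm_num) le_rfl
  set M := ∫ y in (0:ℝ)..1, ((U y)^2 + (U' y)^2) with hM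
  -- FTC between two points a ≤ b in [0,1]
  have key : ∀ a b : ℝ, 0 ≤ a → a ≤ b → b ≤ 1 →
      (U b)^2 - (U a)^2 = ∫ t in a..b, 2*(U t * U' t) := by
    intro a b ha hab hb
    have hG : ∀ t ∈ Ioo a b, HasDerivAt (fun t => (U t)^2) (2*(U t * U' t)) t := by
      intro t ht
      rw [mem_Ioo] at ht
      have := (hd t ⟨lt_of_le_of_lt ha ht.1, lt_of_lt_of_le ht.2 hb⟩).pow 2
      refine this.congr_deriv ?_
      simp only [Nat.cast_ofNat, Nat.reduceSub, pow_one]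
      ring
    exact (my_ftc hab ((hU.pow 2).mono (Icc_subset_Icc ha hb)) hG
      ((ii_of_contOn (hU.mul hU') ha hab hb).const_mul 2)).symm
  have habs : ∀ a b : ℝ, 0 ≤ a → a ≤ b → b ≤ 1 →
      -(∫ t in a..b, 2*(U t * U' t)) ≤ M ∧ (∫ t in a..b, 2*(U t * U' t)) ≤ M := by
    intro a b ha hab hb
    have i1 : IntervalIntegrable (fun t => 2*(U t * U' t)) volume a b :=
      (ii_of_contOn (hU.mul hU') ha hab hb).const_mul 2
    have i1' : IntervalIntegrable (fun t => -(2*(U t * U' t))) volume a b := i1.neg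
    have iSab : IntervalIntegrable (fun t => (U t)^2 + (U' t)^2) volume a b :=
      ii_of_contOn cS ha hab hb
    have hsub : (∫ t in a..b, ((U t)^2 + (U' t)^2)) ≤ M := by
      apply intervalIntegral.integral_mono_interval ha hab hb
        ((ae_restrict_iff' measurableSet_Ioc).mpr
          (Filter.Eventually.of_forall (fun t _ => by positivity))) iS
    constructor
    · have h := intervalIntegral.integral_mono_on hab i1' iSab
        (fun t _ => by nlinarith [sq_nonneg (U t + U' t)])
      rw [intervalIntegral.integral_neg] at h
      linarith
    · have h := intervalIntegral.integral_mono_on hab i1 iSab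
        (fun t _ => by nlinarith [sq_nonneg (U t - U' t)])
      linarith
  have claim : ∀ y ∈ Icc (0:ℝ) 1, (U x)^2 - M ≤ (U y)^2 := by
    intro y hy
    rw [mem_Icc] at hy
    rcases le_total x y with h | h
    · have hk := key x y hx.1 h hy.2
      have := (habs x y hx.1 h hy.2).1
      linarith
    · have hk := key y x hy.1 h hx.2
      have := (habs y x hy.1 h hx.2).2
      linarith
  have havg : (U x)^2 - M ≤ ∫ y in (0:ℝ)..1, (U y)^2 := by
    have h := intervalIntegral.integral_mono_on (by norm_num : (0:ℝ) ≤ 1)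
      (_root_.intervalIntegrable_const (c := (U x)^2 - M)) iU2
      (fun y hy => claim y hy)
    rw [intervalIntegral.integral_const, smul_eq_mul] at h
    linarith
  have hMsplit : M = (∫ y in (0:ℝ)..1, (U y)^2) + ∫ y in (0:ℝ)..1, (U' y)^2 := by
    rw [hM, intervalIntegral.integral_add iU2 iU'2]
  linarith

/-- Combination of (5.15), (5.38), (5.39): with `ρ₀ x = min x (1-x)`,
`‖∂ₓv‖_{L^∞(0,1)} ≤ C (‖ρ₀∂ₓv‖ + ‖ρ₀∂ₓ²v‖ + ‖ρ₀²∂ₓ²v‖ + ‖ρ₀²∂ₓ³v‖ + ‖ρ₀²∂ₓ⁴v‖)_{L²}`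
for `v ∈ C⁴([0,1])`. -/
theorem Linfty_gradient_weighted_bound :
    ∃ C : ℝ, 0 < C ∧
      ∀ v : ℝ → ℝ, ContDiffOn ℝ 4 v (Icc (0:ℝ) 1) →
        ∀ x ∈ Icc (0:ℝ) 1,
          |iteratedDerivWithin 1 v (Icc (0:ℝ) 1) x| ≤
            C * (Real.sqrt (∫ y in (0:ℝ)..1,
                    (min y (1 - y) * iteratedDerivWithin 1 v (Icc (0:ℝ) 1) y) ^ 2)
                + Real.sqrt (∫ y in (0:ℝ)..1,
                    (min y (1 - y) * iteratedDerivWithin 2 v (Icc (0:ℝ) 1) y) ^ 2)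
                + Real.sqrt (∫ y in (0:ℝ)..1,
                    ((min y (1 - y)) ^ 2 * iteratedDerivWithin 2 v (Icc (0:ℝ) 1) y) ^ 2)
                + Real.sqrt (∫ y in (0:ℝ)..1,
                    ((min y (1 - y)) ^ 2 * iteratedDerivWithin 3 v (Icc (0:ℝ) 1) y) ^ 2)
                + Real.sqrt (∫ y in (0:ℝ)..1,
                    ((min y (1 - y)) ^ 2 * iteratedDerivWithin 4 v (Icc (0:ℝ) 1) y) ^ 2)) := by
  refine ⟨7692, by norm_num, ?_⟩
  intro v hv x hx
  have hud : UniqueDiffOn ℝ (Icc (0:ℝ) 1) := uniqueDiffOn_Icc (by norm_num)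
  have hcont : ∀ n : ℕ, n ≤ 4 →
      ContinuousOn (iteratedDerivWithin n v (Icc (0:ℝ) 1)) (Icc (0:ℝ) 1) := by
    intro n hn
    exact hv.continuousOn_iteratedDerivWithin (by exact_mod_cast hn) hud
  have hder : ∀ n : ℕ, n < 4 → ∀ y ∈ Ioo (0:ℝ) 1,
      HasDerivAt (iteratedDerivWithin n v (Icc (0:ℝ) 1))
        (iteratedDerivWithin (n+1) v (Icc (0:ℝ) 1) y) y := by
    intro n hn y hy
    have hdiff : DifferentiableOn ℝ (iteratedDerivWithin n v (Icc (0:ℝ) 1)) (Icc (0:ℝ) 1) :=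
      hv.differentiableOn_iteratedDerivWithin (by exact_mod_cast hn) hud
    have h1 : HasDerivWithinAt (iteratedDerivWithin n v (Icc (0:ℝ) 1))
        (derivWithin (iteratedDerivWithin n v (Icc (0:ℝ) 1)) (Icc (0:ℝ) 1) y) (Icc (0:ℝ) 1) y :=
      (hdiff y (Ioo_subset_Icc_self hy)).hasDerivWithinAt
    rw [iteratedDerivWithin_succ]
    exact h1.hasDerivAt (Icc_mem_nhds hy.1 hy.2)
  set D1 := iteratedDerivWithin 1 v (Icc (0:ℝ) 1) with hD1
  set D2 := iteratedDerivWithin 2 v (Icc (0:ℝ) 1) with hD2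
  set D3 := iteratedDerivWithin 3 v (Icc (0:ℝ) 1) with hD3
  set D4 := iteratedDerivWithin 4 v (Icc (0:ℝ) 1) with hD4
  have c1 : ContinuousOn D1 (Icc (0:ℝ) 1) := hcont 1 (by norm_num)
  have c2 : ContinuousOn D2 (Icc (0:ℝ) 1) := hcont 2 (by norm_num)
  have c3 : ContinuousOn D3 (Icc (0:ℝ) 1) := hcont 3 (by norm_num)
  have c4 : ContinuousOn D4 (Icc (0:ℝ) 1) := hcont 4 (by norm_num)
  have d12 : ∀ y ∈ Ioo (0:ℝ) 1, HasDerivAt D1 (D2 y) y := by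
    intro y hy; exact hder 1 (by norm_num) y hy
  have d23 : ∀ y ∈ Ioo (0:ℝ) 1, HasDerivAt D2 (D3 y) y := by
    intro y hy; exact hder 2 (by norm_num) y hy
  have d34 : ∀ y ∈ Ioo (0:ℝ) 1, HasDerivAt D3 (D4 y) y := by
    intro y hy; exact hder 3 (by norm_num) y hy
  have cd : ContinuousOn (fun y : ℝ => min y (1-y)) (Icc (0:ℝ) 1) :=
    (continuous_id.min (continuous_const.sub continuous_id)).continuousOn
  set T1 := ∫ y in (0:ℝ)..1, (min y (1 - y) * D1 y) ^ 2 with hT1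
  set T2 := ∫ y in (0:ℝ)..1, (min y (1 - y) * D2 y) ^ 2 with hT2
  set T3 := ∫ y in (0:ℝ)..1, ((min y (1 - y)) ^ 2 * D2 y) ^ 2 with hT3
  set T4 := ∫ y in (0:ℝ)..1, ((min y (1 - y)) ^ 2 * D3 y) ^ 2 with hT4
  set T5 := ∫ y in (0:ℝ)..1, ((min y (1 - y)) ^ 2 * D4 y) ^ 2 with hT5
  have iT : ∀ (f : ℝ → ℝ), ContinuousOn f (Icc (0:ℝ) 1) →
      IntervalIntegrable (fun y => (f y)^2) volume 0 1 :=
    fun f hf => ii_of_contOn (hf.pow 2) le_rfl (by norm_num) le_rfl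
  have iT1 := iT (fun y => min y (1 - y) * D1 y) (cd.mul c1)
  have iT2 := iT (fun y => min y (1 - y) * D2 y) (cd.mul c2)
  have iT4 := iT (fun y => (min y (1 - y)) ^ 2 * D3 y) ((cd.pow 2).mul c3)
  have iT5 := iT (fun y => (min y (1 - y)) ^ 2 * D4 y) ((cd.pow 2).mul c4)
  have hTnn : ∀ (f : ℝ → ℝ), 0 ≤ ∫ y in (0:ℝ)..1, (f y)^2 :=
    fun f => intervalIntegral.integral_nonneg (by norm_num) (fun y _ => sq_nonneg _)
  have hT1nn : 0 ≤ T1 := hTnn _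
  have hT2nn : 0 ≤ T2 := hTnn _
  have hT3nn : 0 ≤ T3 := hTnn _
  have hT4nn : 0 ≤ T4 := hTnn _
  have hT5nn : 0 ≤ T5 := hTnn _
  -- Hardy estimates
  have H1 := hardy_full 0 (by norm_num) D1 D2 c1 c2 d12
  have H2 := hardy_full 0 (by norm_num) D2 D3 c2 c3 d23
  have H3 := hardy_full 1 (by norm_num) D3 D4 c3 c4 d34
  norm_num at H1 H2 H3
  -- rewrite RHS of H1 as T1 + T2
  have e1 : (∫ y in (0:ℝ)..1, (min y (1-y))^2 * ((D1 y)^2 + (D2 y)^2)) = T1 + T2 := by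
    rw [hT1, hT2, ← intervalIntegral.integral_add iT1 iT2]
    apply intervalIntegral.integral_congr
    intro y _
    ring
  have e2 : (∫ y in (0:ℝ)..1, (min y (1-y))^2 * ((D2 y)^2 + (D3 y)^2))
      = T2 + ∫ y in (0:ℝ)..1, (min y (1-y))^2 * (D3 y)^2 := by
    rw [hT2, ← intervalIntegral.integral_add iT2
      (ii_of_contOn (f := fun y => (min y (1-y))^2 * (D3 y)^2) ((cd.pow 2).mul (c3.pow 2)) le_rfl (by norm_num) le_rfl)]
    apply intervalIntegral.integral_congr
    intro y _
    ring
  have e3 : (∫ y in (0:ℝ)..1, (min y (1-y))^4 * ((D3 y)^2 + (D4 y)^2)) = T4 + T5 := by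
    rw [hT4, hT5, ← intervalIntegral.integral_add iT4 iT5]
    apply intervalIntegral.integral_congr
    intro y _
    ring
  rw [e1] at H1
  rw [e2] at H2
  rw [e3] at H3
  -- Sobolev
  have S0 := sobolev_pt D1 D2 c1 c2 d12 hx
  have key : (D1 x)^2 ≤ 7692^2 * (T1 + T2 + T3 + T4 + T5) := by nlinarith
  -- conclude
  have hs2 : T1 + T2 + T3 + T4 + T5 ≤
      (Real.sqrt T1 + Real.sqrt T2 + Real.sqrt T3 + Real.sqrt T4 + Real.sqrt T5)^2 := by
    have q1 := Real.sq_sqrt hT1nn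
    have q2 := Real.sq_sqrt hT2nn
    have q3 := Real.sq_sqrt hT3nn
    have q4 := Real.sq_sqrt hT4nn
    have q5 := Real.sq_sqrt hT5nn
    have n1 := Real.sqrt_nonneg T1
    have n2 := Real.sqrt_nonneg T2
    have n3 := Real.sqrt_nonneg T3
    have n4 := Real.sqrt_nonneg T4
    have n5 := Real.sqrt_nonneg T5
    nlinarith [mul_nonneg n1 n2, mul_nonneg n1 n3, mul_nonneg n1 n4, mul_nonneg n1 n5,
      mul_nonneg n2 n3, mul_nonneg n2 n4, mul_nonneg n2 n5, mul_nonneg n3 n4,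
      mul_nonneg n3 n5, mul_nonneg n4 n5]
  set S := Real.sqrt T1 + Real.sqrt T2 + Real.sqrt T3 + Real.sqrt T4 + Real.sqrt T5 with hSdef
  have hSnn : 0 ≤ S := by positivity
  have hfin : (D1 x)^2 ≤ (7692 * S)^2 := by nlinarith
  have := Real.sqrt_le_sqrt hfin
  rwa [Real.sqrt_sq_eq_abs, Real.sqrt_sq (by positivity)] at this
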